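/- Let α, β > 0, η = α/(α + iβ), and Q(x) = 2(eˣ + η e^{−x})/(e^{2x} + 2 + |η|² e^{−2x}). With u = e^{2x} > 0, one has Re(Q̄(x) Q′(x)) = 0 if and only if the polynomial α⁴(u−1)(u+1)³ + 2α²β² u(u³+1) + β⁴(u−2)u³ vanishes; the positive real roots of this polynomial are u = α/√(α²+β²), and additionally u = (β² − α² ± β√(β² − 3α²))/(α² + β²) when β² ≥ 3α². In particular, when β² < 3α² the function x ↦ Re(Q̄(x)Q′(x)) has exactly one real zero. -/

import Mathlib

open Complex

/-- `η = α/(α + iβ)`. -/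
noncomputable def etaSS (α β : ℝ) : ℂ := (α : ℂ) / ((α : ℂ) + Complex.I * (β : ℂ))

/-- The Sasa–Satsuma profile `Q(x) = 2(eˣ + ηe^{-x})/(e^{2x} + 2 + |η|²e^{-2x})`. -/
noncomputable def QSS (α β : ℝ) (x : ℝ) : ℂ :=
  2 * (Complex.exp (x : ℂ) + etaSS α β * Complex.exp (-(x : ℂ))) /
    (Complex.exp (2 * (x : ℂ)) + 2
      + (Complex.normSq (etaSS α β) : ℂ) * Complex.exp (-(2 * (x : ℂ))))

namespace SSaux

lemma eta_re (α β : ℝ) : (etaSS α β).re = α^2/(α^2+β^2) := by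
  simp [etaSS, Complex.div_re, Complex.normSq_apply]
  ring

lemma eta_im (α β : ℝ) : (etaSS α β).im = -(α*β)/(α^2+β^2) := by
  simp [etaSS, Complex.div_im, Complex.normSq_apply]
  ring

lemma eta_normSq (α β : ℝ) : Complex.normSq (etaSS α β) = α^2/(α^2+β^2) := by
  simp [etaSS, Complex.normSq_div, Complex.normSq_apply]
  ring

lemma D_eq (m : ℝ) (x : ℝ) :
    Complex.exp (2 * (x : ℂ)) + 2 + (m : ℂ) * Complex.exp (-(2 * (x : ℂ)))
      = ((Real.exp (2*x) + 2 + m * Real.exp (-(2*x)) : ℝ) : ℂ) := by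
  push_cast [Complex.ofReal_exp]
  norm_num

lemma D_pos (m : ℝ) (hm : 0 ≤ m) (x : ℝ) :
    0 < Real.exp (2*x) + 2 + m * Real.exp (-(2*x)) := by
  have h1 := Real.exp_pos (2*x)
  have h2 := Real.exp_pos (-(2*x))
  nlinarith

lemma hasDerivAt_QSS (α β : ℝ) (x : ℝ) :
    HasDerivAt (QSS α β)
      (((2 * (Complex.exp (x:ℂ) - etaSS α β * Complex.exp (-(x:ℂ)))) *
          (Complex.exp (2*(x:ℂ)) + 2 + (Complex.normSq (etaSS α β) : ℂ) * Complex.exp (-(2*(x:ℂ))))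
        - (2 * (Complex.exp (x:ℂ) + etaSS α β * Complex.exp (-(x:ℂ)))) *
          (2 * Complex.exp (2*(x:ℂ)) - 2 * (Complex.normSq (etaSS α β) : ℂ) * Complex.exp (-(2*(x:ℂ)))))
        / (Complex.exp (2*(x:ℂ)) + 2 + (Complex.normSq (etaSS α β) : ℂ) * Complex.exp (-(2*(x:ℂ))))^2) x := by
  have hid : HasDerivAt (fun y : ℝ => (y : ℂ)) 1 x := by
    simpa using (hasDerivAt_id x).ofReal_comp
  have he : HasDerivAt (fun y : ℝ => Complex.exp (y:ℂ)) (Complex.exp (x:ℂ)) x := by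
    simpa using hid.cexp
  have hen : HasDerivAt (fun y : ℝ => Complex.exp (-(y:ℂ))) (-Complex.exp (-(x:ℂ))) x := by
    simpa using hid.neg.cexp
  have he2 : HasDerivAt (fun y : ℝ => Complex.exp (2*(y:ℂ))) (2 * Complex.exp (2*(x:ℂ))) x := by
    simpa [mul_comm] using (hid.const_mul (2:ℂ)).cexp
  have he2n : HasDerivAt (fun y : ℝ => Complex.exp (-(2*(y:ℂ)))) (-(2 * Complex.exp (-(2*(x:ℂ))))) x := by
    simpa [mul_comm] using ((hid.const_mul (2:ℂ)).neg).cexp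
  have hN : HasDerivAt (fun y : ℝ => 2 * (Complex.exp (y:ℂ) + etaSS α β * Complex.exp (-(y:ℂ))))
      (2 * (Complex.exp (x:ℂ) - etaSS α β * Complex.exp (-(x:ℂ)))) x := by
    have := (he.add (hen.const_mul (etaSS α β))).const_mul (2:ℂ)
    exact this.congr_deriv (by ring)
  have hD : HasDerivAt (fun y : ℝ => Complex.exp (2*(y:ℂ)) + 2 + (Complex.normSq (etaSS α β) : ℂ) * Complex.exp (-(2*(y:ℂ))))
      (2 * Complex.exp (2*(x:ℂ)) - 2 * (Complex.normSq (etaSS α β) : ℂ) * Complex.exp (-(2*(x:ℂ)))) x := by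
    have := ((he2.add_const (2:ℂ)).add (he2n.const_mul ((Complex.normSq (etaSS α β) : ℂ))))
    exact this.congr_deriv (by ring)
  have hDne : Complex.exp (2*(x:ℂ)) + 2 + (Complex.normSq (etaSS α β) : ℂ) * Complex.exp (-(2*(x:ℂ))) ≠ 0 := by
    rw [D_eq]
    have := D_pos (Complex.normSq (etaSS α β)) (Complex.normSq_nonneg _) x
    exact_mod_cast ne_of_gt (by exact_mod_cast this)
  exact hN.div hD hDne

lemma div_ofReal_re' (z : ℂ) (r : ℝ) : (z / (r:ℂ)).re = z.re / r := by
  rcases eq_or_ne r 0 with h | h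
  · simp [h]
  · rw [Complex.div_re]
    simp [Complex.normSq_ofReal]
    field_simp

lemma re_formula (α β : ℝ) (hα : 0 < α) (hβ : 0 < β) (x : ℝ) :
    ((starRingEnd ℂ) (QSS α β x) * deriv (QSS α β) x).re
      = (-4 * Real.exp (2*x) * (Real.exp (2*x)^2 - α^2/(α^2+β^2)) *
          (Real.exp (2*x)^2 + (4*(α^2/(α^2+β^2))-2)*Real.exp (2*x) + α^2/(α^2+β^2)))
        / (Real.exp (2*x)^2 + 2*Real.exp (2*x) + α^2/(α^2+β^2))^3 := by
  set m : ℝ := α^2/(α^2+β^2) with hm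
  have hs : (0:ℝ) < α^2+β^2 := by positivity
  have hmpos : 0 < m := by positivity
  rw [(hasDerivAt_QSS α β x).deriv]
  rw [QSS, eta_normSq α β, ← hm, D_eq m x]
  set d : ℝ := Real.exp (2*x) + 2 + m * Real.exp (-(2*x)) with hd
  have hdpos : 0 < d := D_pos m hmpos.le x
  set η : ℂ := etaSS α β with hη
  set N : ℂ := 2 * (Complex.exp (x:ℂ) + η * Complex.exp (-(x:ℂ))) with hN
  set E : ℂ := 2 * (Complex.exp (x:ℂ) - η * Complex.exp (-(x:ℂ))) * (d:ℂ)
      - N * (2 * Complex.exp (2*(x:ℂ)) - 2 * (m:ℂ) * Complex.exp (-(2*(x:ℂ)))) with hE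
  have key : (starRingEnd ℂ) (N / (d:ℂ)) * (E / (d:ℂ)^2)
      = ((starRingEnd ℂ) N * E) / ((d^3 : ℝ) : ℂ) := by
    rw [map_div₀, Complex.conj_ofReal]
    push_cast
    ring
  rw [key, div_ofReal_re']
  have c1 : Complex.exp ((x:ℝ):ℂ) = ((Real.exp x : ℝ):ℂ) := (Complex.ofReal_exp x).symm
  have c2 : Complex.exp (-(x:ℂ)) = ((Real.exp (-x) : ℝ):ℂ) := by
    rw [← Complex.ofReal_neg, Complex.ofReal_exp]
  have c3 : Complex.exp (2*(x:ℂ)) = ((Real.exp (2*x) : ℝ):ℂ) := by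
    rw [show (2*(x:ℂ)) = ((2*x:ℝ):ℂ) by push_cast; ring, Complex.ofReal_exp]
  have c4 : Complex.exp (-(2*(x:ℂ))) = ((Real.exp (-(2*x)) : ℝ):ℂ) := by
    rw [show (-(2*(x:ℂ))) = ((-(2*x):ℝ):ℂ) by push_cast; ring, Complex.ofReal_exp]
  rw [hE, hN, c1, c2, c3, c4]
  have hre : η.re = m := by rw [hη, eta_re α β, hm]
  have him : η.im = -(α*β)/(α^2+β^2) := by rw [hη, eta_im α β]
  simp only [Complex.mul_re, Complex.mul_im, Complex.add_re, Complex.add_im,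
    Complex.sub_re, Complex.sub_im, Complex.ofReal_re, Complex.ofReal_im,
    Complex.conj_re, Complex.conj_im, Complex.neg_re, Complex.neg_im,
    Complex.re_ofNat, Complex.im_ofNat, hre, him, map_mul, map_ofNat,
    map_add, map_sub, Complex.conj_ofReal]
  have e1 : Real.exp (2*x) = (Real.exp x)^2 := by
    rw [two_mul, Real.exp_add]; ring
  have e2 : Real.exp (-x) = (Real.exp x)⁻¹ := Real.exp_neg x
  have e3 : Real.exp (-(2*x)) = ((Real.exp x)^2)⁻¹ := by
    rw [Real.exp_neg, e1]
  rw [hd, hm] at *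
  rw [e1, e2, e3]
  have hex : Real.exp x ≠ 0 := (Real.exp_pos x).ne'
  field_simp
  ring

/-- division-free factorization of the quartic -/
lemma P_factor (α β u : ℝ) :
    α ^ 4 * (u - 1) * (u + 1) ^ 3 + 2 * α ^ 2 * β ^ 2 * u * (u ^ 3 + 1)
      + β ^ 4 * (u - 2) * u ^ 3
    = ((α^2+β^2)*u^2 - α^2) *
        ((α^2+β^2)*u^2 + (4*α^2-2*(α^2+β^2))*u + α^2) := by
  ring

lemma sq_root_iff (α β : ℝ) (hα : 0 < α) (hβ : 0 < β) (u : ℝ) (hu : 0 < u) :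
    (α^2+β^2)*u^2 - α^2 = 0 ↔ u = α / Real.sqrt (α^2+β^2) := by
  have hs : (0:ℝ) < α^2+β^2 := by positivity
  have hr : (α / Real.sqrt (α^2+β^2))^2 = α^2/(α^2+β^2) := by
    rw [div_pow, Real.sq_sqrt hs.le]
  have hrpos : 0 < α / Real.sqrt (α^2+β^2) := by positivity
  constructor
  · intro h
    have h2 : u^2 = (α / Real.sqrt (α^2+β^2))^2 := by
      rw [hr]
      field_simp
      linarith
    nlinarith
  · intro h
    rw [h]
    have h3 : (α^2+β^2) * (α / Real.sqrt (α^2+β^2))^2 = α^2 := by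
      rw [hr]
      field_simp
    linarith

lemma quad_iff (α β : ℝ) (hα : 0 < α) (hβ : 0 < β) (u : ℝ) :
    (α^2+β^2)*u^2 + (4*α^2-2*(α^2+β^2))*u + α^2 = 0 ↔
      (3 * α ^ 2 ≤ β ^ 2 ∧
        (u = (β ^ 2 - α ^ 2 + β * Real.sqrt (β ^ 2 - 3 * α ^ 2)) / (α ^ 2 + β ^ 2) ∨
          u = (β ^ 2 - α ^ 2 - β * Real.sqrt (β ^ 2 - 3 * α ^ 2)) / (α ^ 2 + β ^ 2))) := by
  have hs : (0:ℝ) < α^2+β^2 := by positivity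
  constructor
  · intro h
    have key : ((α^2+β^2)*u - (β^2-α^2))^2 = β^2*(β^2-3*α^2) := by
      linear_combination (α^2+β^2) * h
    have hle : 3 * α^2 ≤ β^2 := by
      have h0 : 0 ≤ β^2*(β^2-3*α^2) := key ▸ sq_nonneg _
      by_contra hc
      push_neg at hc
      nlinarith [h0, mul_pos (mul_pos hβ hβ) (show (0:ℝ) < 3*α^2 - β^2 by linarith)]
    refine ⟨hle, ?_⟩
    set t := Real.sqrt (β^2 - 3*α^2) with ht
    have ht2 : t^2 = β^2 - 3*α^2 := Real.sq_sqrt (by linarith)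
    have key2 : ((α^2+β^2)*u - (β^2-α^2) - β*t) * ((α^2+β^2)*u - (β^2-α^2) + β*t) = 0 := by
      linear_combination key - β^2 * ht2
    rcases mul_eq_zero.1 key2 with h2 | h2
    · left
      field_simp
      linarith
    · right
      field_simp
      linarith
  · rintro ⟨hle, h | h⟩ <;>
    · set t := Real.sqrt (β^2 - 3*α^2) with ht
      have ht2 : t^2 = β^2 - 3*α^2 := Real.sq_sqrt (by linarith)
      have hsu : (α^2+β^2)*u = β^2-α^2 + β*t ∨ (α^2+β^2)*u = β^2-α^2 - β*t := by
        first
        | · left; rw [h]; field_simp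
        | · right; rw [h]; field_simp
      have hmul : (α^2+β^2) * ((α^2+β^2)*u^2 + (4*α^2-2*(α^2+β^2))*u + α^2) = 0 := by
        rcases hsu with hsu | hsu
        · linear_combination ((α^2+β^2)*u + (β^2-α^2+β*t) + 4*α^2-2*(α^2+β^2)) * hsu + β^2 * ht2
        · linear_combination ((α^2+β^2)*u + (β^2-α^2-β*t) + 4*α^2-2*(α^2+β^2)) * hsu + β^2 * ht2
      rcases mul_eq_zero.1 hmul with h0 | h0
      · exact absurd h0 hs.ne'
      · exact h0

/-- Re(Q̄ Q') = 0 iff the quartic vanishes at u = e^{2x} -/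
lemma zero_iff (α β : ℝ) (hα : 0 < α) (hβ : 0 < β) (x : ℝ) :
    ((starRingEnd ℂ) (QSS α β x) * deriv (QSS α β) x).re = 0 ↔
      α ^ 4 * (Real.exp (2 * x) - 1) * (Real.exp (2 * x) + 1) ^ 3
        + 2 * α ^ 2 * β ^ 2 * Real.exp (2 * x) * (Real.exp (2 * x) ^ 3 + 1)
        + β ^ 4 * (Real.exp (2 * x) - 2) * Real.exp (2 * x) ^ 3 = 0 := by
  rw [re_formula α β hα hβ x, P_factor]
  set u : ℝ := Real.exp (2*x) with hu
  have hupos : 0 < u := Real.exp_pos _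
  have hs : (0:ℝ) < α^2+β^2 := by positivity
  have hm : (0:ℝ) < α^2/(α^2+β^2) := by positivity
  have hden : (0:ℝ) < (u^2 + 2*u + α^2/(α^2+β^2))^3 := by positivity
  rw [div_eq_zero_iff]
  have hnum : -4 * u * (u^2 - α^2/(α^2+β^2)) * (u^2 + (4*(α^2/(α^2+β^2))-2)*u + α^2/(α^2+β^2))
      = (-4*u/(α^2+β^2)^2) * (((α^2+β^2)*u^2 - α^2) * ((α^2+β^2)*u^2 + (4*α^2-2*(α^2+β^2))*u + α^2)) := by
    field_simp
  rw [hnum]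
  constructor
  · rintro (h | h)
    · rcases mul_eq_zero.1 h with h1 | h1
      · exact absurd h1 (by
          have : -4*u/(α^2+β^2)^2 < 0 := by
            apply div_neg_of_neg_of_pos <;> nlinarith
          linarith)
      · exact h1
    · exact absurd h hden.ne'
  · intro h
    left
    rw [h, mul_zero]

end SSaux

open SSaux in
/-- Zeros of `Re(Q̄ Q′)`: with `u = e^{2x}`, `Re(Q̄(x)Q′(x)) = 0` iff
`α⁴(u-1)(u+1)³ + 2α²β²u(u³+1) + β⁴(u-2)u³ = 0`; the positive roots of this
polynomial are `u = α/√(α²+β²)` and, when `β² ≥ 3α²`,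
`u = (β²-α² ± β√(β²-3α²))/(α²+β²)`.  In particular, when `β² < 3α²` the
function `x ↦ Re(Q̄(x)Q′(x))` has exactly one real zero. -/
theorem stmt_11 (α β : ℝ) (hα : 0 < α) (hβ : 0 < β) :
    (∀ x : ℝ,
        ((starRingEnd ℂ) (QSS α β x) * deriv (QSS α β) x).re = 0 ↔
          α ^ 4 * (Real.exp (2 * x) - 1) * (Real.exp (2 * x) + 1) ^ 3
            + 2 * α ^ 2 * β ^ 2 * Real.exp (2 * x) * (Real.exp (2 * x) ^ 3 + 1)
            + β ^ 4 * (Real.exp (2 * x) - 2) * Real.exp (2 * x) ^ 3 = 0)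
    ∧ (∀ u : ℝ, 0 < u →
        (α ^ 4 * (u - 1) * (u + 1) ^ 3 + 2 * α ^ 2 * β ^ 2 * u * (u ^ 3 + 1)
            + β ^ 4 * (u - 2) * u ^ 3 = 0 ↔
          (u = α / Real.sqrt (α ^ 2 + β ^ 2) ∨
            (3 * α ^ 2 ≤ β ^ 2 ∧
              (u = (β ^ 2 - α ^ 2 + β * Real.sqrt (β ^ 2 - 3 * α ^ 2)) / (α ^ 2 + β ^ 2) ∨
                u = (β ^ 2 - α ^ 2 - β * Real.sqrt (β ^ 2 - 3 * α ^ 2)) / (α ^ 2 + β ^ 2))))))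
    ∧ (β ^ 2 < 3 * α ^ 2 →
        ∃! x : ℝ, ((starRingEnd ℂ) (QSS α β x) * deriv (QSS α β) x).re = 0) := by
  have hpoly : ∀ u : ℝ, 0 < u →
      (α ^ 4 * (u - 1) * (u + 1) ^ 3 + 2 * α ^ 2 * β ^ 2 * u * (u ^ 3 + 1)
          + β ^ 4 * (u - 2) * u ^ 3 = 0 ↔
        (u = α / Real.sqrt (α ^ 2 + β ^ 2) ∨
          (3 * α ^ 2 ≤ β ^ 2 ∧
            (u = (β ^ 2 - α ^ 2 + β * Real.sqrt (β ^ 2 - 3 * α ^ 2)) / (α ^ 2 + β ^ 2) ∨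
              u = (β ^ 2 - α ^ 2 - β * Real.sqrt (β ^ 2 - 3 * α ^ 2)) / (α ^ 2 + β ^ 2))))) := by
    intro u hu
    rw [P_factor, mul_eq_zero, sq_root_iff α β hα hβ u hu, quad_iff α β hα hβ u]
  refine ⟨fun x => zero_iff α β hα hβ x, hpoly, ?_⟩
  intro hlt
  have hs : (0:ℝ) < α^2+β^2 := by positivity
  have hrpos : 0 < α / Real.sqrt (α^2+β^2) := by positivity
  have hzero : ∀ x : ℝ, ((starRingEnd ℂ) (QSS α β x) * deriv (QSS α β) x).re = 0 ↔
      Real.exp (2*x) = α / Real.sqrt (α^2+β^2) := by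
    intro x
    rw [zero_iff α β hα hβ x, hpoly (Real.exp (2*x)) (Real.exp_pos _)]
    constructor
    · rintro (h | ⟨hle, _⟩)
      · exact h
      · linarith
    · intro h
      exact Or.inl h
  refine ⟨Real.log (α / Real.sqrt (α^2+β^2)) / 2, ?_, ?_⟩
  · show ((starRingEnd ℂ) (QSS α β _) * deriv (QSS α β) _).re = 0
    rw [hzero]
    rw [show 2 * (Real.log (α / Real.sqrt (α^2+β^2)) / 2) = Real.log (α / Real.sqrt (α^2+β^2)) by ring]
    exact Real.exp_log hrpos
  · intro y hy
    rw [hzero] at hy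
    have : Real.exp (2*y) = Real.exp (Real.log (α / Real.sqrt (α^2+β^2))) := by
      rw [hy, Real.exp_log hrpos]
    have h2 := Real.exp_injective this
    linarith
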